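/- The set Θ(T) = {θ : F(T) → ℝ : θ negative definite, θ(∅)=0, θ({t})=1 for all t ∈ T} is compact in the topology of pointwise convergence on ℝ^{F(T)}. In particular, a pointwise limit of such functions again belongs to Θ(T), and every θ ∈ Θ(T) satisfies 1 ≤ θ(A) ≤ |A| for nonempty finite A. -/

import Mathlib

open Finset Filter

/-- `ψ` is negative definite (in the semigroup sense) on `(Finset T, ∪, ∅)`. -/
def NegDef {T : Type*} [DecidableEq T] (ψ : Finset T → ℝ) : Prop :=
  ∀ n : ℕ, 2 ≤ n → ∀ (K : Fin n → Finset T) (a : Fin n → ℝ),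
    (∑ j, a j) = 0 → ∑ j, ∑ k, a j * a k * ψ (K j ∪ K k) ≤ 0

/-- The set `Θ(T)` of ECFs. -/
def Theta (T : Type*) [DecidableEq T] : Set (Finset T → ℝ) :=
  {θ | NegDef θ ∧ θ ∅ = 0 ∧ ∀ t : T, θ {t} = 1}

lemma negdef_two {T : Type*} [DecidableEq T] {ψ : Finset T → ℝ} (h : NegDef ψ)
    (A B : Finset T) : ψ A + ψ B ≤ 2 * ψ (A ∪ B) := by
  have := h 2 le_rfl ![A, B] ![1, -1] (by simp [Fin.sum_univ_two])
  simp only [Fin.sum_univ_two, Matrix.cons_val_zero, Matrix.cons_val_one, Matrix.head_cons,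
    Finset.union_self] at this
  have hBA : B ∪ A = A ∪ B := Finset.union_comm B A
  rw [hBA] at this
  linarith

lemma negdef_subadd {T : Type*} [DecidableEq T] {ψ : Finset T → ℝ} (h : NegDef ψ)
    (h0 : ψ ∅ = 0) (A B : Finset T) : ψ (A ∪ B) ≤ ψ A + ψ B := by
  have := h 4 (by norm_num) ![A, B, A ∪ B, ∅] ![1, 1, -1, -1]
    (by simp [Fin.sum_univ_four])
  simp only [Fin.sum_univ_four, Matrix.cons_val_zero, Matrix.cons_val_one, Matrix.head_cons,
    Matrix.cons_val_two, Matrix.tail_cons, Matrix.cons_val_three,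
    Finset.union_self, Finset.union_empty, Finset.empty_union] at this
  have h1 : B ∪ A = A ∪ B := Finset.union_comm B A
  have h2 : A ∪ (A ∪ B) = A ∪ B := by rw [← Finset.union_assoc, Finset.union_self]
  have h3 : B ∪ (A ∪ B) = A ∪ B := by
    rw [Finset.union_comm A B, ← Finset.union_assoc, Finset.union_self]
  have h4 : (A ∪ B) ∪ A = A ∪ B := by rw [Finset.union_right_comm, Finset.union_self]
  have h5 : (A ∪ B) ∪ B = A ∪ B := by rw [Finset.union_assoc, Finset.union_self]
  rw [h1, h2, h3, h4, h5, h0] at this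
  linarith

lemma negdef_nonneg {T : Type*} [DecidableEq T] {ψ : Finset T → ℝ} (h : NegDef ψ)
    (h0 : ψ ∅ = 0) (A : Finset T) : 0 ≤ ψ A := by
  have := negdef_two h A ∅
  rw [h0, Finset.union_empty] at this
  linarith

lemma theta_lower {T : Type*} [DecidableEq T] {θ : Finset T → ℝ} (hθ : θ ∈ Theta T)
    {A : Finset T} (hA : A.Nonempty) : 1 ≤ θ A := by
  obtain ⟨hnd, h0, h1⟩ := hθ
  obtain ⟨t, ht⟩ := hA
  have := negdef_two hnd {t} A
  rw [Finset.union_eq_right.2 (by simpa using ht), h1 t] at this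
  linarith

lemma theta_upper {T : Type*} [DecidableEq T] {θ : Finset T → ℝ} (hθ : θ ∈ Theta T)
    (A : Finset T) : θ A ≤ A.card := by
  obtain ⟨hnd, h0, h1⟩ := hθ
  induction A using Finset.induction_on with
  | empty => simp [h0]
  | @insert t s hx ih =>
    have hsub := negdef_subadd hnd h0 {t} s
    rw [h1 t] at hsub
    have : θ (insert t s) ≤ 1 + θ s := by
      rw [Finset.insert_eq]; exact hsub
    rw [Finset.card_insert_of_notMem hx]
    push_cast
    linarith

lemma theta_closed (T : Type*) [DecidableEq T] : IsClosed (Theta T) := by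
  have hND : IsClosed {θ : Finset T → ℝ | NegDef θ} := by
    have : {θ : Finset T → ℝ | NegDef θ} =
        ⋂ (n : ℕ) (_ : 2 ≤ n) (K : Fin n → Finset T) (a : Fin n → ℝ)
          (_ : (∑ j, a j) = 0), {θ | ∑ j, ∑ k, a j * a k * θ (K j ∪ K k) ≤ 0} := by
      ext θ
      simp [NegDef, Set.mem_iInter]
    rw [this]
    refine isClosed_iInter fun n => isClosed_iInter fun _ => isClosed_iInter fun K =>
      isClosed_iInter fun a => isClosed_iInter fun _ => ?_
    exact isClosed_le (by continuity) continuous_const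
  have h0 : IsClosed {θ : Finset T → ℝ | θ ∅ = 0} :=
    isClosed_eq (continuous_apply _) continuous_const
  have h1 : IsClosed {θ : Finset T → ℝ | ∀ t : T, θ {t} = 1} := by
    have : {θ : Finset T → ℝ | ∀ t : T, θ {t} = 1} = ⋂ t : T, {θ | θ {t} = 1} := by
      ext θ; simp
    rw [this]
    exact isClosed_iInter fun t => isClosed_eq (continuous_apply _) continuous_const
  have : Theta T = {θ : Finset T → ℝ | NegDef θ} ∩
      ({θ | θ ∅ = 0} ∩ {θ | ∀ t : T, θ {t} = 1}) := by
    ext θ; simp [Theta, and_assoc]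
  rw [this]
  exact hND.inter (h0.inter h1)

/-- `Θ(T)` is compact in the topology of pointwise convergence; in particular it
is closed under pointwise limits, and every `θ ∈ Θ(T)` satisfies
`1 ≤ θ(A) ≤ |A|` for nonempty finite `A`. -/
theorem Theta_compact {T : Type*} [DecidableEq T] :
    IsCompact (Theta T) ∧
    (∀ (θn : ℕ → Finset T → ℝ) (f : Finset T → ℝ), (∀ n, θn n ∈ Theta T) →
      Tendsto θn atTop (nhds f) → f ∈ Theta T) ∧
    (∀ θ ∈ Theta T, ∀ A : Finset T, A.Nonempty → 1 ≤ θ A ∧ θ A ≤ A.card) := by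
  refine ⟨?_, ?_, ?_⟩
  · have hbig : IsCompact (Set.univ.pi fun A : Finset T => Set.Icc (0 : ℝ) A.card) :=
      isCompact_univ_pi fun A => isCompact_Icc
    refine hbig.of_isClosed_subset (theta_closed T) ?_
    intro θ hθ
    intro A _
    exact ⟨negdef_nonneg hθ.1 hθ.2.1 A, theta_upper hθ A⟩
  · intro θn f hmem htend
    exact (theta_closed T).mem_of_tendsto htend (Filter.Eventually.of_forall hmem)
  · intro θ hθ A hA
    exact ⟨theta_lower hθ hA, theta_upper hθ A⟩
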